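/- Let M N : ℕ be positive, A : Matrix (Fin M) (Fin M) ℝ and B : Matrix (Fin N) (Fin N) ℝ both positive semidefinite. Then the kernel dimension of the Kronecker sum is the product of the kernel dimensions: Module.finrank ℝ (LinearMap.ker (Matrix.mulVecLin (A ⊞ B))) = Module.finrank ℝ (LinearMap.ker (Matrix.mulVecLin A)) * Module.finrank ℝ (LinearMap.ker (Matrix.mulVecLin B)). -/

import Mathlib

open Kronecker Matrix


/-- The Kronecker sum `A ⊞ B = A ⊗ I_N + I_M ⊗ B` of two square matrices. -/
def kronSum {M N : ℕ} (A : Matrix (Fin M) (Fin M) ℝ) (B : Matrix (Fin N) (Fin N) ℝ) :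
    Matrix (Fin M × Fin N) (Fin M × Fin N) ℝ :=
  fun p q => (if p.2 = q.2 then A p.1 q.1 else 0) + (if p.1 = q.1 then B p.2 q.2 else 0)

open Matrix in
lemma kronSum_eq {M N : ℕ} (A : Matrix (Fin M) (Fin M) ℝ) (B : Matrix (Fin N) (Fin N) ℝ) :
    kronSum A B = A ⊗ₖ (1 : Matrix (Fin N) (Fin N) ℝ) + (1 : Matrix (Fin M) (Fin M) ℝ) ⊗ₖ B := by
  ext p q
  simp [kronSum, Matrix.kroneckerMap_apply, Matrix.one_apply, mul_ite, ite_mul, Matrix.add_apply]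

open Matrix in
lemma finrank_ker_mulVecLin {n : Type*} [Fintype n] (X : Matrix n n ℝ) :
    Module.finrank ℝ (LinearMap.ker X.mulVecLin) = Fintype.card n - X.rank := by
  have h := LinearMap.finrank_range_add_finrank_ker X.mulVecLin
  rw [Module.finrank_pi] at h
  rw [Matrix.rank]
  omega

theorem finrank_ker_kronSum_of_posSemidef
    (M N : ℕ) (hM : 0 < M) (hN : 0 < N)
    (A : Matrix (Fin M) (Fin M) ℝ) (B : Matrix (Fin N) (Fin N) ℝ)
    (hA : A.PosSemidef) (hB : B.PosSemidef) :
    Module.finrank ℝ (LinearMap.ker (Matrix.mulVecLin (kronSum A B))) =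
      Module.finrank ℝ (LinearMap.ker (Matrix.mulVecLin A)) *
        Module.finrank ℝ (LinearMap.ker (Matrix.mulVecLin B)) := by
  classical
  have hAh := hA.1
  have hBh := hB.1
  set a : Fin M → ℝ := hAh.eigenvalues with ha
  set b : Fin N → ℝ := hBh.eigenvalues with hb
  set U : Matrix (Fin M) (Fin M) ℝ := (Matrix.IsHermitian.eigenvectorUnitary hAh : Matrix (Fin M) (Fin M) ℝ) with hUdef
  set V : Matrix (Fin N) (Fin N) ℝ := (Matrix.IsHermitian.eigenvectorUnitary hBh : Matrix (Fin N) (Fin N) ℝ) with hVdef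
  have hU : U * Uᴴ = 1 := by
    simpa [Matrix.star_eq_conjTranspose] using
      (Matrix.mem_unitaryGroup_iff.mp (Matrix.IsHermitian.eigenvectorUnitary hAh).2)
  have hU' : Uᴴ * U = 1 := by
    simpa [Matrix.star_eq_conjTranspose] using
      (Matrix.mem_unitaryGroup_iff'.mp (Matrix.IsHermitian.eigenvectorUnitary hAh).2)
  have hV : V * Vᴴ = 1 := by
    simpa [Matrix.star_eq_conjTranspose] using
      (Matrix.mem_unitaryGroup_iff.mp (Matrix.IsHermitian.eigenvectorUnitary hBh).2)
  have hV' : Vᴴ * V = 1 := by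
    simpa [Matrix.star_eq_conjTranspose] using
      (Matrix.mem_unitaryGroup_iff'.mp (Matrix.IsHermitian.eigenvectorUnitary hBh).2)
  have hAspec : A = U * Matrix.diagonal a * Uᴴ := by
    have := hAh.spectral_theorem
    simpa [Matrix.star_eq_conjTranspose, Function.comp] using this
  have hBspec : B = V * Matrix.diagonal b * Vᴴ := by
    have := hBh.spectral_theorem
    simpa [Matrix.star_eq_conjTranspose, Function.comp] using this
  -- diagonalization of the Kronecker sum
  set d : Fin M × Fin N → ℝ := fun p => a p.1 + b p.2 with hd
  set W : Matrix (Fin M × Fin N) (Fin M × Fin N) ℝ := U ⊗ₖ V with hW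
  set W' : Matrix (Fin M × Fin N) (Fin M × Fin N) ℝ := Uᴴ ⊗ₖ Vᴴ with hW'
  have hWW' : W * W' = 1 := by
    rw [hW, hW', ← Matrix.mul_kronecker_mul, hU, hV, Matrix.one_kronecker_one]
  have hW'W : W' * W = 1 := by
    rw [hW, hW', ← Matrix.mul_kronecker_mul, hU', hV', Matrix.one_kronecker_one]
  have hdet : IsUnit W.det := Matrix.isUnit_det_of_right_inverse hWW'
  have hdet' : IsUnit W'.det := Matrix.isUnit_det_of_right_inverse hW'W
  have hdiag : kronSum A B = W * Matrix.diagonal d * W' := by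
    have h1 : A ⊗ₖ (1 : Matrix (Fin N) (Fin N) ℝ) =
        W * (Matrix.diagonal a ⊗ₖ (1 : Matrix (Fin N) (Fin N) ℝ)) * W' := by
      rw [hW, hW', ← Matrix.mul_kronecker_mul, ← Matrix.mul_kronecker_mul]
      rw [hAspec]
      congr 1
      rw [Matrix.mul_one, hV]
    have h2 : (1 : Matrix (Fin M) (Fin M) ℝ) ⊗ₖ B =
        W * ((1 : Matrix (Fin M) (Fin M) ℝ) ⊗ₖ Matrix.diagonal b) * W' := by
      rw [hW, hW', ← Matrix.mul_kronecker_mul, ← Matrix.mul_kronecker_mul]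
      rw [hBspec]
      congr 2
      rw [Matrix.mul_one, hU]
    have h3 : Matrix.diagonal a ⊗ₖ (1 : Matrix (Fin N) (Fin N) ℝ) +
        (1 : Matrix (Fin M) (Fin M) ℝ) ⊗ₖ Matrix.diagonal b = Matrix.diagonal d := by
      rw [show (1 : Matrix (Fin N) (Fin N) ℝ) = Matrix.diagonal (fun _ => (1:ℝ)) by
            simp [Matrix.diagonal_one],
          show (1 : Matrix (Fin M) (Fin M) ℝ) = Matrix.diagonal (fun _ => (1:ℝ)) by
            simp [Matrix.diagonal_one],
          Matrix.diagonal_kronecker_diagonal, Matrix.diagonal_kronecker_diagonal,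
          Matrix.diagonal_add]
      simp [hd]
    rw [kronSum_eq, h1, h2, ← Matrix.add_mul, ← Matrix.mul_add, h3]
  -- rank computations
  have hrank : (kronSum A B).rank = (Matrix.diagonal d).rank := by
    rw [hdiag, Matrix.rank_mul_eq_left_of_isUnit_det _ _ hdet',
      Matrix.rank_mul_eq_right_of_isUnit_det _ _ hdet]
  have hrankA : A.rank = (Matrix.diagonal a).rank := hAh.rank_eq_rank_diagonal
  have hrankB : B.rank = (Matrix.diagonal b).rank := hBh.rank_eq_rank_diagonal
  -- zero eigenvalue counts
  set zA := Fintype.card {l // a l = 0} with hzA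
  set zB := Fintype.card {i // b i = 0} with hzB
  have hcardA : (Matrix.diagonal a).rank = M - zA := by
    rw [Matrix.rank_diagonal]
    have := Fintype.card_subtype_compl (fun l : Fin M => a l = 0)
    simp [Fintype.card_fin, hzA]
  have hcardB : (Matrix.diagonal b).rank = N - zB := by
    rw [Matrix.rank_diagonal]
    have := Fintype.card_subtype_compl (fun i : Fin N => b i = 0)
    simp [Fintype.card_fin, hzB]
  have hzAle : zA ≤ M := by
    simpa [Fintype.card_fin] using Fintype.card_subtype_le (fun l : Fin M => a l = 0)
  have hzBle : zB ≤ N := by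
    simpa [Fintype.card_fin] using Fintype.card_subtype_le (fun i : Fin N => b i = 0)
  -- kernel of the Kronecker sum
  have hanneg : ∀ l, 0 ≤ a l := fun l => hA.eigenvalues_nonneg l
  have hbnneg : ∀ i, 0 ≤ b i := fun i => hB.eigenvalues_nonneg i
  have hdzero : ∀ p : Fin M × Fin N, d p = 0 ↔ (a p.1 = 0 ∧ b p.2 = 0) := by
    intro p
    constructor
    · intro h
      have h' : a p.1 + b p.2 = 0 := h
      constructor
      · linarith [hanneg p.1, hbnneg p.2]
      · linarith [hanneg p.1, hbnneg p.2]
    · rintro ⟨h1, h2⟩; simp [hd, h1, h2]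
  have hcardd : Fintype.card {p : Fin M × Fin N // d p = 0} = zA * zB := by
    rw [hzA, hzB, ← Fintype.card_prod]
    apply Fintype.card_congr
    exact (Equiv.subtypeEquivRight hdzero).trans
      (Equiv.subtypeProdEquivProd (p := fun l => a l = 0) (q := fun i => b i = 0))
  have hcardD : (Matrix.diagonal d).rank = M * N - zA * zB := by
    rw [Matrix.rank_diagonal]
    have := Fintype.card_subtype_compl (fun p : Fin M × Fin N => d p = 0)
    simp only [Fintype.card_prod, Fintype.card_fin] at this
    rw [this, hcardd]
  have hzzle : zA * zB ≤ M * N := Nat.mul_le_mul hzAle hzBle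
  rw [finrank_ker_mulVecLin, finrank_ker_mulVecLin, finrank_ker_mulVecLin,
    hrank, hrankA, hrankB, hcardA, hcardB, hcardD]
  simp only [Fintype.card_prod, Fintype.card_fin]
  rw [Nat.sub_sub_self hzzle, Nat.sub_sub_self hzAle, Nat.sub_sub_self hzBle]
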